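/- arXiv:2510.00511 — 2 statements merged into one kernel-verified Lean document; each statement's English description precedes it below -/
import Mathlib

section
/- The multi-resolution limiter's troubled-cell decision is scale-invariant: for any k ≥ 1, any k-times continuously differentiable p : ℝ² → ℝ, any point (x₀,y₀), any A > 0, any real cell averages p̄₀, p̄₁, p̄₁₁, p̄₁₂, p̄₂, p̄₂₁, p̄₂₂, p̄₃, p̄₃₁, p̄₃₂, any constant C_k > 0, and any λ ≠ 0 and σ ∈ ℝ, the inequality IS^k ≤ C_k · IS⁰ holds for the transformed data (function λ·p + σ and cell averages λ·p̄ⱼ + σ) if and only if it holds for the original data. -/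
open Finset

/-- The substencil smoothness indicator
`IS_l = max(|p̄₀ − p̄_l|, |p̄₀ − p̄_{l1}|, |p̄₀ − p̄_{l2}|)`. -/
noncomputable def ISsub (p0 pl pl1 pl2 : ℝ) : ℝ :=
  max |p0 - pl| (max |p0 - pl1| |p0 - pl2|)

/-- The baseline smoothness indicator `IS⁰ = min(IS₁, IS₂, IS₃)`. -/
noncomputable def ISbase (p0 p1 p11 p12 p2 p21 p22 p3 p31 p32 : ℝ) : ℝ :=
  min (ISsub p0 p1 p11 p12) (min (ISsub p0 p2 p21 p22) (ISsub p0 p3 p31 p32))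

/-- Partial derivative with respect to the first variable. -/
noncomputable def pderivX (f : ℝ → ℝ → ℝ) : ℝ → ℝ → ℝ :=
  fun x y => deriv (fun x' => f x' y) x

/-- Partial derivative with respect to the second variable. -/
noncomputable def pderivY (f : ℝ → ℝ → ℝ) : ℝ → ℝ → ℝ :=
  fun x y => deriv (fun y' => f x y') y

/-- The mixed partial derivative `∂^{m+n} f / ∂x^m ∂y^n`. -/
noncomputable def mixedPartial (f : ℝ → ℝ → ℝ) (m n : ℕ) : ℝ → ℝ → ℝ :=
  pderivX^[m] (pderivY^[n] f)

/-- The cell smoothness indicator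
`IS^k(p) = A · Σ_{l=0}^{k} (1/((k−l)!·l!)) · |∂^k p / ∂x^{k−l}∂y^l (x₀, y₀)|`. -/
noncomputable def ISk (A : ℝ) (k : ℕ) (p : ℝ → ℝ → ℝ) (x0 y0 : ℝ) : ℝ :=
  A * ∑ l ∈ Finset.range (k + 1),
    (1 / ((Nat.factorial (k - l) : ℝ) * (Nat.factorial l : ℝ))) *
      |mixedPartial p (k - l) l x0 y0|

lemma pderivX_smul (c : ℝ) (f : ℝ → ℝ → ℝ) :
    pderivX (fun x y => c * f x y) = fun x y => c * pderivX f x y := by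
  funext x y; simp [pderivX, deriv_const_mul_field]

lemma pderivY_smul (c : ℝ) (f : ℝ → ℝ → ℝ) :
    pderivY (fun x y => c * f x y) = fun x y => c * pderivY f x y := by
  funext x y; simp [pderivY, deriv_const_mul_field]

lemma pderivX_affine (c s : ℝ) (f : ℝ → ℝ → ℝ) :
    pderivX (fun x y => c * f x y + s) = fun x y => c * pderivX f x y := by
  funext x y; simp [pderivX, deriv_add_const, deriv_const_mul_field]

lemma pderivY_affine (c s : ℝ) (f : ℝ → ℝ → ℝ) :
    pderivY (fun x y => c * f x y + s) = fun x y => c * pderivY f x y := by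
  funext x y; simp [pderivY, deriv_add_const, deriv_const_mul_field]

lemma iterX_smul (n : ℕ) (c : ℝ) (f : ℝ → ℝ → ℝ) :
    pderivX^[n] (fun x y => c * f x y) = fun x y => c * pderivX^[n] f x y := by
  induction n generalizing f with
  | zero => rfl
  | succ n ih =>
      rw [Function.iterate_succ_apply, Function.iterate_succ_apply,
        pderivX_smul, ih]

lemma iterY_smul (n : ℕ) (c : ℝ) (f : ℝ → ℝ → ℝ) :
    pderivY^[n] (fun x y => c * f x y) = fun x y => c * pderivY^[n] f x y := by
  induction n generalizing f with
  | zero => rfl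
  | succ n ih =>
      rw [Function.iterate_succ_apply, Function.iterate_succ_apply,
        pderivY_smul, ih]

lemma mixed_affine (c s : ℝ) (p : ℝ → ℝ → ℝ) (m n : ℕ) (h : 1 ≤ m + n) :
    mixedPartial (fun x y => c * p x y + s) m n
      = fun x y => c * mixedPartial p m n x y := by
  unfold mixedPartial
  match n, m with
  | 0, 0 => omega
  | 0, m + 1 =>
      rw [show (pderivY^[0] fun x y => c * p x y + s) = fun x y => c * p x y + s from rfl,
        Function.iterate_succ_apply, pderivX_affine, iterX_smul,
        Function.iterate_succ_apply]
      rfl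
  | n + 1, m =>
      rw [Function.iterate_succ_apply, pderivY_affine, iterY_smul, iterX_smul,
        Function.iterate_succ_apply]

lemma ISk_scale (A : ℝ) (k : ℕ) (hk : 1 ≤ k) (p : ℝ → ℝ → ℝ) (x0 y0 c s : ℝ) :
    ISk A k (fun x y => c * p x y + s) x0 y0 = |c| * ISk A k p x0 y0 := by
  unfold ISk
  have h : ∑ l ∈ Finset.range (k + 1),
      (1 / ((Nat.factorial (k - l) : ℝ) * (Nat.factorial l : ℝ))) *
        |mixedPartial (fun x y => c * p x y + s) (k - l) l x0 y0|
      = ∑ l ∈ Finset.range (k + 1),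
        |c| * ((1 / ((Nat.factorial (k - l) : ℝ) * (Nat.factorial l : ℝ))) *
          |mixedPartial p (k - l) l x0 y0|) := by
    refine Finset.sum_congr rfl fun l hl => ?_
    rw [mixed_affine c s p (k - l) l (by simp at hl; omega)]
    rw [abs_mul]; ring
  rw [h, ← Finset.mul_sum]; ring

lemma ISsub_scale (c s p0 pl pl1 pl2 : ℝ) :
    ISsub (c * p0 + s) (c * pl + s) (c * pl1 + s) (c * pl2 + s)
      = |c| * ISsub p0 pl pl1 pl2 := by
  unfold ISsub
  have h : ∀ a b : ℝ, |(c * a + s) - (c * b + s)| = |c| * |a - b| := by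
    intro a b; rw [← abs_mul]; ring_nf
  rw [h, h, h, ← mul_max_of_nonneg _ _ (abs_nonneg c),
    ← mul_max_of_nonneg _ _ (abs_nonneg c)]

lemma ISbase_scale (c s p0 p1 p11 p12 p2 p21 p22 p3 p31 p32 : ℝ) :
    ISbase (c * p0 + s) (c * p1 + s) (c * p11 + s) (c * p12 + s)
      (c * p2 + s) (c * p21 + s) (c * p22 + s) (c * p3 + s) (c * p31 + s) (c * p32 + s)
      = |c| * ISbase p0 p1 p11 p12 p2 p21 p22 p3 p31 p32 := by
  unfold ISbase
  rw [ISsub_scale, ISsub_scale, ISsub_scale,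
    ← mul_min_of_nonneg _ _ (abs_nonneg c), ← mul_min_of_nonneg _ _ (abs_nonneg c)]

/-- The multi-resolution limiter's troubled-cell decision `IS^k ≤ C_k · IS⁰` is
scale-invariant: it holds for the affinely transformed data (function `λ·p + σ`
and cell averages `λ·p̄ⱼ + σ`, with `λ ≠ 0`) iff it holds for the original data. -/
theorem MR_limiter_decision_scale_invariant
    (k : ℕ) (hk : 1 ≤ k) (p : ℝ → ℝ → ℝ)
    (hp : ContDiff ℝ (k : ℕ∞) (fun q : ℝ × ℝ => p q.1 q.2))
    (x0 y0 : ℝ) (A : ℝ) (hA : 0 < A)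
    (p0 p1 p11 p12 p2 p21 p22 p3 p31 p32 : ℝ)
    (Ck : ℝ) (hCk : 0 < Ck) (lam sig : ℝ) (hlam : lam ≠ 0) :
    (ISk A k (fun x y => lam * p x y + sig) x0 y0 ≤
        Ck * ISbase (lam * p0 + sig) (lam * p1 + sig) (lam * p11 + sig) (lam * p12 + sig)
          (lam * p2 + sig) (lam * p21 + sig) (lam * p22 + sig)
          (lam * p3 + sig) (lam * p31 + sig) (lam * p32 + sig)) ↔
      ISk A k p x0 y0 ≤ Ck * ISbase p0 p1 p11 p12 p2 p21 p22 p3 p31 p32 := by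
  rw [ISk_scale A k hk p x0 y0 lam sig, ISbase_scale]
  have hl : 0 < |lam| := abs_pos.mpr hlam
  rw [show Ck * (|lam| * ISbase p0 p1 p11 p12 p2 p21 p22 p3 p31 p32)
      = |lam| * (Ck * ISbase p0 p1 p11 p12 p2 p21 p22 p3 p31 p32) by ring]
  exact mul_le_mul_iff_right₀ hl
end

section
/- A step discontinuity inside a one-dimensional substencil is detected at full jump strength independently of the mesh size: let h > 0, let K_i = [x_c + (i − j − 1/2)h, x_c + (i − j + 1/2)h] for i = j−2, j−1, j be three consecutive cells of length h, let u⁻ ≠ u⁺ be reals, let u(x) = u⁻ for x < s and u(x) = u⁺ for x ≥ s where s lies in the open interior of the cell K_{j−1}, and let ū_i = (1/h)∫_{K_i} u. Then IS_L := max(|ū_j − ū_{j−1}|, |ū_j − ū_{j−2}|) = |u⁺ − u⁻|. -/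
open intervalIntegral

/-- A step discontinuity located in the interior of the middle cell `K_{j−1}` of a
one-dimensional substencil `{K_{j−2}, K_{j−1}, K_j}` of uniform cells of length `h`
is detected at full jump strength, independently of the mesh size:
`IS_L = max(|ū_j − ū_{j−1}|, |ū_j − ū_{j−2}|) = |u⁺ − u⁻|`. -/
theorem step_discontinuity_full_jump
    (h xc s um up : ℝ) (hh : 0 < h) (hne : um ≠ up)
    (hs1 : xc - 3 / 2 * h < s) (hs2 : s < xc - 1 / 2 * h)
    (u : ℝ → ℝ) (hu : ∀ x, u x = if x < s then um else up)
    (ubarj ubarjm1 ubarjm2 : ℝ)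
    (hj : ubarj = (1 / h) * ∫ x in (xc - 1 / 2 * h)..(xc + 1 / 2 * h), u x)
    (hjm1 : ubarjm1 = (1 / h) * ∫ x in (xc - 3 / 2 * h)..(xc - 1 / 2 * h), u x)
    (hjm2 : ubarjm2 = (1 / h) * ∫ x in (xc - 5 / 2 * h)..(xc - 3 / 2 * h), u x) :
    max |ubarj - ubarjm1| |ubarj - ubarjm2| = |up - um| := by
  set a : ℝ := xc - 3 / 2 * h with ha
  set b : ℝ := xc - 1 / 2 * h with hb
  set c : ℝ := xc + 1 / 2 * h with hc
  set z : ℝ := xc - 5 / 2 * h with hz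
  have hza : z < a := by simp only [hz, ha]; linarith
  have hab : a < b := by simp only [ha, hb]; linarith
  have hbc : b < c := by simp only [hb, hc]; linarith
  -- cell j integral: u = up there
  have hIj : ∫ x in b..c, u x = (c - b) * up := by
    rw [intervalIntegral.integral_congr (g := fun _ => up) ?_]
    · simp [smul_eq_mul, mul_comm]
    · intro x hx
      rw [Set.uIcc_of_le hbc.le] at hx
      rw [hu]
      rw [if_neg (by push_neg; linarith [hx.1])]
  -- cell j-2 integral: u = um there
  have hIjm2 : ∫ x in z..a, u x = (a - z) * um := by
    rw [intervalIntegral.integral_congr (g := fun _ => um) ?_]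
    · simp [smul_eq_mul, mul_comm]
    · intro x hx
      rw [Set.uIcc_of_le hza.le] at hx
      rw [hu, if_pos (by linarith [hx.2])]
  -- middle cell: split at s
  have has : a < s := hs1
  have hsb : s < b := hs2
  have hI1int : IntervalIntegrable u MeasureTheory.volume a s := by
    refine (_root_.intervalIntegrable_const (c := um)).congr_ae ?_
    have h1 : ∀ᵐ x ∂(MeasureTheory.volume.restrict (Set.uIoc a s)), x ∈ Set.uIoc a s :=
      MeasureTheory.ae_restrict_mem measurableSet_uIoc
    have h2 : ∀ᵐ (x : ℝ) ∂(MeasureTheory.volume.restrict (Set.uIoc a s)), x ≠ s :=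
      MeasureTheory.ae_restrict_of_ae (by
        have : MeasureTheory.volume ({s} : Set ℝ) = 0 := MeasureTheory.measure_singleton s
        exact MeasureTheory.ae_iff.2 (by simpa using this))
    filter_upwards [h1, h2] with x hx hxs
    rw [Set.uIoc_of_le has.le] at hx
    rw [hu, if_pos (lt_of_le_of_ne hx.2 hxs)]
  have hI2int : IntervalIntegrable u MeasureTheory.volume s b := by
    refine (_root_.intervalIntegrable_const (c := up)).congr_ae ?_
    have h1 : ∀ᵐ x ∂(MeasureTheory.volume.restrict (Set.uIoc s b)), x ∈ Set.uIoc s b :=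
      MeasureTheory.ae_restrict_mem measurableSet_uIoc
    filter_upwards [h1] with x hx
    rw [Set.uIoc_of_le hsb.le] at hx
    rw [hu, if_neg (by push_neg; linarith [hx.1])]
  have hI1 : ∫ x in a..s, u x = (s - a) * um := by
    rw [intervalIntegral.integral_congr_ae (g := fun _ => um) ?_]
    · simp [smul_eq_mul, mul_comm]
    · have h2 : ∀ᵐ (x : ℝ), x ≠ s :=
        MeasureTheory.ae_iff.2 (by simpa using MeasureTheory.measure_singleton s)
      filter_upwards [h2] with x hxs hx
      rw [Set.uIoc_of_le has.le] at hx
      rw [hu, if_pos (lt_of_le_of_ne hx.2 hxs)]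
  have hI2 : ∫ x in s..b, u x = (b - s) * up := by
    rw [intervalIntegral.integral_congr (g := fun _ => up) ?_]
    · simp [smul_eq_mul, mul_comm]
    · intro x hx
      rw [Set.uIcc_of_le hsb.le] at hx
      rw [hu, if_neg (by push_neg; linarith [hx.1])]
  have hIjm1 : ∫ x in a..b, u x = (s - a) * um + (b - s) * up := by
    rw [← intervalIntegral.integral_add_adjacent_intervals hI1int hI2int, hI1, hI2]
  -- values of the averages
  have hcb : c - b = h := by simp only [hb, hc]; ring
  have haz : a - z = h := by simp only [ha, hz]; ring
  have hba : b - a = h := by simp only [ha, hb]; ring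
  have hne' : h ≠ 0 := ne_of_gt hh
  have hj' : ubarj = up := by rw [hj, hIj, hcb]; field_simp
  have hjm2' : ubarjm2 = um := by rw [hjm2, hIjm2, haz]; field_simp
  have hjm1' : ubarjm1 = ((s - a) * um + (b - s) * up) / h := by
    rw [hjm1, hIjm1]; ring
  -- compute the two differences
  have hd2 : |ubarj - ubarjm2| = |up - um| := by rw [hj', hjm2']
  have hd1 : |ubarj - ubarjm1| = ((s - a) / h) * |up - um| := by
    rw [hj', hjm1']
    have : up - ((s - a) * um + (b - s) * up) / h = ((s - a) / h) * (up - um) := by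
      field_simp
      linear_combination up * hba
    rw [this, abs_mul, abs_of_nonneg (div_nonneg (by linarith) hh.le)]
  have hle : |ubarj - ubarjm1| ≤ |ubarj - ubarjm2| := by
    rw [hd1, hd2]
    have h1 : (s - a) / h ≤ 1 := by
      rw [div_le_one hh]; linarith
    nlinarith [abs_nonneg (up - um)]
  rw [max_eq_right hle, hd2]
end
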